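/- Let q = 2^s and k ≤ q/2. There exists a monic polynomial g(X) ∈ F_q[X] of degree k such that the k-th power of the companion matrix of g is MDS (that is, [I_k | C^k] generates a [2k, k, k+1]_q code, where C = Companion matrix of g). -/

import Mathlib

open Polynomial

noncomputable def minDist {ι F : Type*} [Fintype ι] [DecidableEq F] [Zero F]
    (Γ : Set (ι → F)) : ℕ :=
  sInf {w | ∃ c ∈ Γ, c ≠ 0 ∧ hammingNorm c = w}

namespace Stmt18Aux

open Polynomial Matrix Finset

variable {F : Type*} [Field F]

noncomputable def toPoly {k : ℕ} (x : Fin k → F) : F[X] :=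
  ∑ i : Fin k, Polynomial.C (x i) * Polynomial.X ^ (i : ℕ)

lemma toPoly_coeff {k : ℕ} (x : Fin k → F) (n : ℕ) :
    (toPoly x).coeff n = if h : n < k then x ⟨n, h⟩ else 0 := by
  rw [toPoly, finset_sum_coeff]
  simp only [coeff_C_mul, coeff_X_pow, mul_ite, mul_one, mul_zero]
  split_ifs with h
  · rw [Finset.sum_eq_single (⟨n, h⟩ : Fin k)]
    · simp
    · intro b _ hb
      rw [if_neg]
      intro hnb
      exact hb (by ext; simp [← hnb])
    · simp
  · exact Finset.sum_eq_zero fun b _ => by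
      rw [if_neg]; intro hnb; exact h (hnb ▸ b.isLt)

lemma toPoly_single {k : ℕ} (c : Fin k) :
    toPoly (fun j : Fin k => if (j : ℕ) = (c : ℕ) then (1 : F) else 0)
      = Polynomial.X ^ (c : ℕ) := by
  rw [toPoly, Finset.sum_eq_single c]
  · simp
  · intro b _ hb
    rw [if_neg (fun h => hb (Fin.ext h)), map_zero, zero_mul]
  · simp

lemma toPoly_coeffs {k : ℕ} (g : F[X]) (hg : g.Monic) (hgd : g.natDegree = k) :
    toPoly (fun j : Fin k => g.coeff (j : ℕ)) = g - Polynomial.X ^ k := by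
  ext n
  rw [toPoly_coeff, coeff_sub, coeff_X_pow]
  have hck : g.coeff k = 1 := by
    have := hg.coeff_natDegree; rwa [hgd] at this
  split_ifs with h1 h2 h2
  · omega
  · simp
  · subst h2; rw [hck]; ring
  · have : g.coeff n = 0 := coeff_eq_zero_of_natDegree_lt (by omega)
    rw [this]; ring

lemma step {k : ℕ} (hk : 0 < k) (g : F[X]) (hg : g.Monic)
    (hgd : g.natDegree = k) (Cmat : Matrix (Fin k) (Fin k) F)
    (hC : ∀ i j : Fin k, Cmat i j = if (i : ℕ) + 1 = k then -(g.coeff j)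
          else if (j : ℕ) = (i : ℕ) + 1 then 1 else 0)
    (y : Fin k → F) :
    Polynomial.X * toPoly y - toPoly (Matrix.vecMul y Cmat)
      = Polynomial.C (y ⟨k - 1, Nat.sub_lt hk Nat.one_pos⟩) * g := by
  set lst : Fin k := ⟨k - 1, Nat.sub_lt hk Nat.one_pos⟩ with hlst
  have hlst1 : (lst : ℕ) + 1 = k := by
    simp only [hlst]; omega
  have hrow : ∀ i : Fin k, toPoly (fun j => Cmat i j) =
      if i = lst then Polynomial.X ^ k - g else Polynomial.X ^ ((i : ℕ) + 1) := by
    intro i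
    by_cases hi : i = lst
    · rw [if_pos hi]
      have h1 : (i : ℕ) + 1 = k := by rw [hi]; exact hlst1
      have : (fun j : Fin k => Cmat i j) = fun j : Fin k => -(g.coeff (j : ℕ)) := by
        funext j; rw [hC i j, if_pos h1]
      rw [this]
      have hneg : toPoly (fun j : Fin k => -(g.coeff (j : ℕ)))
          = -toPoly (fun j : Fin k => g.coeff (j : ℕ)) := by
        simp [toPoly, ← Finset.sum_neg_distrib]
      rw [hneg, toPoly_coeffs g hg hgd]; ring
    · rw [if_neg hi]
      have h1 : (i : ℕ) + 1 ≠ k := by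
        intro h; apply hi; ext; simp only [hlst]; omega
      have hlt : (i : ℕ) + 1 < k := by have := i.isLt; omega
      have : (fun j : Fin k => Cmat i j)
          = fun j : Fin k => if (j : ℕ) = ((⟨(i : ℕ) + 1, hlt⟩ : Fin k) : ℕ) then (1 : F) else 0 := by
        funext j; rw [hC i j, if_neg h1]
      rw [this, toPoly_single]
  have hswap : toPoly (Matrix.vecMul y Cmat)
      = ∑ i, Polynomial.C (y i) * toPoly (fun j => Cmat i j) := by
    have hv : ∀ j : Fin k, Matrix.vecMul y Cmat j = ∑ i, y i * Cmat i j := by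
      intro j; rfl
    rw [toPoly]
    simp only [hv, map_sum, Finset.sum_mul]
    rw [Finset.sum_comm]
    simp only [toPoly, Finset.mul_sum, Polynomial.C_mul, mul_assoc]
  have hX : Polynomial.X * toPoly y
      = ∑ i : Fin k, Polynomial.C (y i) * Polynomial.X ^ ((i : ℕ) + 1) := by
    rw [toPoly, Finset.mul_sum]
    apply Finset.sum_congr rfl
    intros; ring
  rw [hswap, hX, ← Finset.sum_sub_distrib]
  rw [Finset.sum_eq_single lst]
  · rw [hrow lst, if_pos rfl, hlst1]; ring
  · intro b _ hb
    rw [hrow b, if_neg hb]; ring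
  · simp


lemma dvd_aux {k : ℕ} (hk : 0 < k) (g : F[X]) (hg : g.Monic)
    (hgd : g.natDegree = k) (Cmat : Matrix (Fin k) (Fin k) F)
    (hC : ∀ i j : Fin k, Cmat i j = if (i : ℕ) + 1 = k then -(g.coeff j)
          else if (j : ℕ) = (i : ℕ) + 1 then 1 else 0)
    (m : ℕ) (x : Fin k → F) :
    g ∣ Polynomial.X ^ m * toPoly x - toPoly (Matrix.vecMul x (Cmat ^ m)) := by
  induction m generalizing x with
  | zero => simp [Matrix.vecMul_one]
  | succ m ih =>
    have h1 := ih x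
    have h2 := step hk g hg hgd Cmat hC (Matrix.vecMul x (Cmat ^ m))
    have hrw : Matrix.vecMul x (Cmat ^ (m + 1))
        = Matrix.vecMul (Matrix.vecMul x (Cmat ^ m)) Cmat := by
      rw [pow_succ, ← Matrix.vecMul_vecMul]
    obtain ⟨u, hu⟩ := h1
    refine ⟨Polynomial.X * u + Polynomial.C ((Matrix.vecMul x (Cmat ^ m)) ⟨k - 1, Nat.sub_lt hk Nat.one_pos⟩), ?_⟩
    rw [hrw]
    have : Polynomial.X ^ (m + 1) * toPoly x
        = Polynomial.X * (Polynomial.X ^ m * toPoly x) := by ring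
    rw [this]
    calc Polynomial.X * (Polynomial.X ^ m * toPoly x)
          - toPoly (Matrix.vecMul (Matrix.vecMul x (Cmat ^ m)) Cmat)
        = Polynomial.X * (Polynomial.X ^ m * toPoly x - toPoly (Matrix.vecMul x (Cmat ^ m)))
          + (Polynomial.X * toPoly (Matrix.vecMul x (Cmat ^ m))
             - toPoly (Matrix.vecMul (Matrix.vecMul x (Cmat ^ m)) Cmat)) := by ring
      _ = g * (Polynomial.X * u + Polynomial.C ((Matrix.vecMul x (Cmat ^ m)) ⟨k - 1, Nat.sub_lt hk Nat.one_pos⟩)) := by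
          rw [hu, h2]; ring

/-- The "codeword polynomial" of the pair `(x, y)`. -/
noncomputable def cw {k : ℕ} (x y : Fin k → F) : F[X] :=
  Polynomial.X ^ k * toPoly x - toPoly y

lemma cw_coeff {k : ℕ} (x y : Fin k → F) (n : ℕ) :
    (cw x y).coeff n = (if h : k ≤ n ∧ n < 2 * k then x ⟨n - k, by omega⟩ else 0)
      - (if h : n < k then y ⟨n, h⟩ else 0) := by
  rw [cw, coeff_sub, Polynomial.coeff_X_pow_mul', toPoly_coeff, toPoly_coeff]
  congr 1
  split_ifs with h1 h2 h3 h4 <;> first | rfl | omega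

lemma cw_natDegree_lt {k : ℕ} (hk : 0 < k) (x y : Fin k → F) :
    (cw x y).natDegree < 2 * k := by
  have : (cw x y).natDegree ≤ 2 * k - 1 := by
    rw [natDegree_le_iff_coeff_eq_zero]
    intro N hN
    rw [cw_coeff]
    rw [dif_neg (by omega), dif_neg (by omega), sub_zero]
  omega

lemma cw_norm {k : ℕ} (hk : 0 < k) (x y : Fin k → F) [DecidableEq F] :
    hammingNorm (Sum.elim x y : (Fin k ⊕ Fin k) → F) = (cw x y).support.card := by
  classical
  rw [hammingNorm]
  refine Finset.card_bij' (fun a _ => Sum.elim (fun i : Fin k => k + (i : ℕ)) (fun i : Fin k => (i : ℕ)) a)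
    (fun n hn => if h : n < k then Sum.inr ⟨n, h⟩ else Sum.inl ⟨n - k, ?_⟩) ?_ ?_ ?_ ?_
  · have hlt := Polynomial.le_natDegree_of_mem_supp n hn
    have := cw_natDegree_lt hk x y
    omega
  · rintro (i | i) ha <;> simp only [Finset.mem_filter, Finset.mem_univ, true_and, Sum.elim_inl, Sum.elim_inr] at ha ⊢
    · rw [Polynomial.mem_support_iff, cw_coeff]
      rw [dif_pos ⟨by omega, by omega⟩, dif_neg (by omega), sub_zero]
      simpa using ha
    · rw [Polynomial.mem_support_iff, cw_coeff]
      rw [dif_neg (by omega), dif_pos i.isLt, zero_sub]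
      simpa using ha
  · intro n hn
    have hlt := Polynomial.le_natDegree_of_mem_supp n hn
    have h2k := cw_natDegree_lt hk x y
    rw [Polynomial.mem_support_iff, cw_coeff] at hn
    simp only [Finset.mem_filter, Finset.mem_univ, true_and]
    split_ifs with h
    · simp only [Sum.elim_inr]
      intro hy
      apply hn
      rw [dif_neg (by omega), dif_pos h, hy, sub_zero]
    · simp only [Sum.elim_inl]
      intro hx
      apply hn
      rw [dif_pos (by omega : k ≤ n ∧ n < 2 * k), dif_neg h, sub_zero]
      exact hx
  · rintro (i | i) ha <;> simp
  · intro n hn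
    have hlt := Polynomial.le_natDegree_of_mem_supp n hn
    have h2k := cw_natDegree_lt hk x y
    by_cases h : n < k
    · simp only [dif_pos h, Sum.elim_inr]
    · simp only [dif_neg h, Sum.elim_inl]
      omega


lemma bch {K : Type*} [Field K] [DecidableEq K] {N : ℕ} (ζ : Kˣ) (hζ : IsPrimitiveRoot ζ N)
    (hodd : ¬ 2 ∣ N) {k : ℕ} (hk : 0 < k) (h2k : 2 * k < N)
    {Q : K[X]} (hQ : Q ≠ 0) (hdeg : Q.natDegree < 2 * k)
    (hroots : ∀ j : ℕ, j < k →
      Q.eval ((ζ ^ (2 * (j : ℤ) - ((k : ℤ) - 1)) : Kˣ) : K) = 0) :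
    k + 1 ≤ Q.support.card := by
  classical
  by_contra hcon
  push_neg at hcon
  have hwpos : 0 < Q.support.card :=
    Finset.card_pos.mpr (Polynomial.nonempty_support_iff.mpr hQ)
  set w := Q.support.card with hw
  have hwk : w ≤ k := by omega
  set e : Fin w → ℕ := fun i => ((Q.support.equivFin.symm i : ℕ)) with he
  have he_mem : ∀ i, e i ∈ Q.support := fun i => (Q.support.equivFin.symm i).2
  have he_lt : ∀ i, e i < 2 * k := fun i =>
    lt_of_le_of_lt (Polynomial.le_natDegree_of_mem_supp _ (he_mem i)) hdeg
  have he_inj : Function.Injective e := fun a b hab => by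
    have := Q.support.equivFin.symm.injective (Subtype.ext hab)
    exact this
  set V : Fin w → K := fun i => ((ζ ^ (2 * (e i : ℤ)) : Kˣ) : K) with hV
  set d : Fin w → K := fun i => ((ζ ^ (-((k : ℤ) - 1) * (e i : ℤ)) : Kˣ) : K) with hd
  set M : Matrix (Fin w) (Fin w) K := (Matrix.vandermonde V)ᵀ * Matrix.diagonal d with hM
  set v : Fin w → K := fun i => Q.coeff (e i) with hv
  have hVinj : Function.Injective V := by
    intro a b hab
    apply he_inj
    have hUab : (ζ ^ (2 * (e a : ℤ)) : Kˣ) = ζ ^ (2 * (e b : ℤ)) := Units.ext hab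
    have h1 : ζ ^ (2 * (e a : ℤ) - 2 * (e b : ℤ)) = 1 := by
      rw [_root_.zpow_sub, hUab, mul_inv_cancel]
    have hdvd := (hζ.zpow_eq_one_iff_dvd _).mp h1
    have hdvd2 : (N : ℤ) ∣ ((e a : ℤ) - (e b : ℤ)) * 2 := by
      have : 2 * (e a : ℤ) - 2 * (e b : ℤ) = ((e a : ℤ) - (e b : ℤ)) * 2 := by ring
      rwa [this] at hdvd
    have hcop : IsCoprime ((N : ℕ) : ℤ) ((2 : ℕ) : ℤ) := by
      rw [Nat.isCoprime_iff_coprime]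
      exact (Nat.coprime_comm.mp ((Nat.prime_two.coprime_iff_not_dvd).mpr hodd))
    have hdvd3 : (N : ℤ) ∣ ((e a : ℤ) - (e b : ℤ)) := by
      refine IsCoprime.dvd_of_dvd_mul_right ?_ hdvd2
      exact_mod_cast hcop
    have habs : ((e a : ℤ) - (e b : ℤ)) = 0 := by
      apply Int.eq_zero_of_abs_lt_dvd hdvd3
      have h1 := he_lt a
      have h2 := he_lt b
      rw [abs_lt]
      constructor <;> [skip; skip] <;> push_cast <;> omega
    omega
  have hdet : M.det ≠ 0 := by
    rw [hM, Matrix.det_mul, Matrix.det_transpose, Matrix.det_diagonal]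
    apply mul_ne_zero
    · exact Matrix.det_vandermonde_ne_zero_iff.mpr hVinj
    · rw [Finset.prod_ne_zero_iff]
      intro i _
      exact Units.ne_zero _
  have hmv : M.mulVec v = 0 := by
    funext j
    have hjk : (j : ℕ) < k := lt_of_lt_of_le j.isLt hwk
    set t : K := ((ζ ^ (2 * ((j : ℕ) : ℤ) - ((k : ℤ) - 1)) : Kˣ) : K) with ht
    have hentry : ∀ i, M j i * v i = v i * t ^ (e i) := by
      intro i
      have h1 : M j i = V i ^ (j : ℕ) * d i := by
        rw [hM]
        rw [Matrix.mul_diagonal]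
        rfl
      have h2 : V i ^ (j : ℕ) * d i = t ^ (e i) := by
        rw [hV, hd, ht]
        rw [← Units.val_pow_eq_pow_val, ← Units.val_pow_eq_pow_val, ← Units.val_mul]
        congr 1
        rw [← zpow_natCast (ζ ^ (2 * (e i : ℤ))) (j : ℕ),
            ← zpow_natCast (ζ ^ (2 * ((j : ℕ) : ℤ) - ((k : ℤ) - 1))) (e i),
            ← _root_.zpow_mul, ← _root_.zpow_mul, ← _root_.zpow_add]
        congr 1
        ring
      rw [h1, h2]
      ring
    have : M.mulVec v j = ∑ i, v i * t ^ (e i) := by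
      rw [Matrix.mulVec]
      simp only [dotProduct]
      exact Finset.sum_congr rfl fun i _ => hentry i
    rw [Pi.zero_apply, this]
    have heval : Q.eval t = ∑ i : Fin w, v i * t ^ (e i) := by
      rw [Polynomial.eval_eq_sum, Polynomial.sum_def]
      rw [← Finset.sum_attach Q.support (fun n => Q.coeff n * t ^ n)]
      exact (Fintype.sum_equiv Q.support.equivFin.symm
        (fun i => v i * t ^ (e i)) (fun n => Q.coeff n * t ^ (n : ℕ)) (fun i => rfl)).symm
    rw [← heval]
    exact hroots j hjk
  have hv0 : v = 0 := Matrix.eq_zero_of_mulVec_eq_zero hdet hmv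
  have : v ⟨0, hwpos⟩ ≠ 0 := by
    rw [hv]
    exact Polynomial.mem_support_iff.mp (he_mem ⟨0, hwpos⟩)
  rw [hv0] at this
  exact this rfl


lemma fixed_mem_range {K : Type*} [Field K] [Algebra F K] [Fintype F]
    {q : ℕ} (hF : Fintype.card F = q) {x : K} (hx : x ^ q = x) :
    x ∈ Set.range (algebraMap F K) := by
  classical
  have hq2 : 2 ≤ q := hF ▸ Fintype.one_lt_card
  set f : K[X] := Polynomial.X ^ q - Polynomial.X with hf
  have hfne : f ≠ 0 := by
    intro h
    have hco : f.coeff q = 0 := by rw [h]; simp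
    rw [hf, coeff_sub, coeff_X_pow, if_pos rfl, Polynomial.coeff_X, if_neg (by omega)] at hco
    simp at hco
  have hdeg : f.natDegree ≤ q := by
    rw [hf]
    refine le_trans (natDegree_sub_le _ _) ?_
    simp only [natDegree_X_pow, natDegree_X]
    omega
  set T : Finset K := Finset.univ.image (algebraMap F K) with hT
  have hTcard : T.card = q := by
    rw [hT, Finset.card_image_of_injective _ (algebraMap F K).injective,
      Finset.card_univ, hF]
  have hTsub : T ⊆ f.roots.toFinset := by
    intro t ht
    rw [hT, Finset.mem_image] at ht
    obtain ⟨a, _, rfl⟩ := ht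
    rw [Multiset.mem_toFinset, Polynomial.mem_roots hfne]
    have hpow : (algebraMap F K a) ^ q = algebraMap F K a := by
      rw [← map_pow]
      congr 1
      rw [← hF]
      exact FiniteField.pow_card a
    simp [Polynomial.IsRoot, hf, hpow]
  have hle : f.roots.toFinset.card ≤ q :=
    le_trans (Multiset.toFinset_card_le _) (le_trans (Polynomial.card_roots' f) hdeg)
  have hEq : T = f.roots.toFinset :=
    Finset.eq_of_subset_of_card_le hTsub (by rw [hTcard]; exact hle)
  have hxroot : x ∈ f.roots.toFinset := by
    rw [Multiset.mem_toFinset, Polynomial.mem_roots hfne]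
    simp [Polynomial.IsRoot, hf, hx]
  rw [← hEq, hT, Finset.mem_image] at hxroot
  obtain ⟨a, _, ha⟩ := hxroot
  exact ⟨a, ha⟩


lemma exists_good_g {q s k : ℕ} (hs : 0 < s) (hq : q = 2 ^ s) (hk : 0 < k) (hkq : 2 * k ≤ q)
    {F : Type*} [Field F] [Fintype F] (hF : Fintype.card F = q) :
    ∃ g : F[X], g.Monic ∧ g.natDegree = k ∧
      ∀ P : F[X], P ≠ 0 → P.natDegree < 2 * k → g ∣ P → k + 1 ≤ P.support.card := by
  classical
  have hq2 : 2 ≤ q := by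
    rw [hq]
    calc 2 = 2 ^ 1 := (pow_one 2).symm
    _ ≤ 2 ^ s := Nat.pow_le_pow_right (by norm_num) hs
  -- characteristic 2
  obtain ⟨p, hp_char⟩ := CharP.exists F
  haveI := hp_char
  obtain ⟨n, hpp, hcard⟩ := FiniteField.card F p
  have hp2 : p = 2 := by
    have hdvd : p ∣ 2 ^ s := by
      rw [← hq, ← hF, hcard]
      exact dvd_pow_self p n.2.ne'
    have hpd : p ∣ 2 := hpp.dvd_of_dvd_pow hdvd
    exact (Nat.prime_dvd_prime_iff_eq hpp Nat.prime_two).mp hpd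
  subst hp2
  haveI hF2 : CharP F 2 := hp_char
  set K := AlgebraicClosure F with hK
  haveI : CharP K 2 := charP_of_injective_algebraMap (algebraMap F K).injective 2
  haveI : ExpChar K 2 := .prime Nat.prime_two
  have h20 : (2 : K) = 0 := by
    have h := CharP.cast_eq_zero K 2
    exact_mod_cast h
  have hq0 : ((q : ℕ) : K) = 0 := by
    rw [hq]
    push_cast
    rw [h20]
    exact zero_pow (by omega)
  haveI : NeZero (((q + 1 : ℕ)) : K) := by
    constructor
    push_cast
    rw [show ((q : ℕ) : K) = 0 from hq0]
    simp
  obtain ⟨ζK, hζK⟩ := HasEnoughRootsOfUnity.exists_primitiveRoot K (q + 1)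
  have hN0 : 0 < q + 1 := by omega
  set ζ : Kˣ := (hζK.isUnit hN0.ne').unit with hζdef
  have hζ : IsPrimitiveRoot ζ (q + 1) := hζK.isUnit_unit hN0.ne'
  have hζcoe : (ζ : K) = ζK := (hζK.isUnit hN0.ne').unit_spec
  have hodd : ¬ 2 ∣ (q + 1) := by
    intro h
    have : 2 ∣ q := by
      rw [hq]; exact dvd_pow_self 2 (by omega)
    omega
  set m : ℕ → ℤ := fun j => 2 * (j : ℤ) - ((k : ℤ) - 1) with hm
  set u : ℕ → K := fun j => ((ζ ^ (m j) : Kˣ) : K) with hu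
  set gK : K[X] := ∏ j ∈ Finset.range k, (Polynomial.X - Polynomial.C (u j)) with hgK
  have hgKmonic : gK.Monic :=
    monic_prod_of_monic _ _ fun j _ => monic_X_sub_C (u j)
  have hgKdeg : gK.natDegree = k := by
    rw [hgK, natDegree_prod_of_monic _ _ (fun j _ => monic_X_sub_C (u j))]
    simp
  have hgKroots : ∀ j : ℕ, j < k → gK.eval (u j) = 0 := by
    intro j hj
    rw [hgK, Polynomial.eval_prod]
    apply Finset.prod_eq_zero (Finset.mem_range.mpr hj)
    simp
  -- Frobenius invariance
  set ψ : K →+* K := iterateFrobenius K 2 s with hψdef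
  have hψ : ∀ z : K, ψ z = z ^ q := by
    intro z
    rw [hψdef, iterateFrobenius_def, hq]
  have hpsi_u : ∀ j : ℕ, j < k → ψ (u j) = u (k - 1 - j) := by
    intro j hj
    have key : ∀ a b : ℤ, a + b = 0 → (ζ ^ (a * (q : ℤ)) : Kˣ) = ζ ^ b := by
      intro a b hab
      have h1 : ζ ^ (a * (q : ℤ) + a) = 1 := by
        have h2 : a * (q : ℤ) + a = ((q + 1 : ℕ) : ℤ) * a := by push_cast; ring
        rw [h2, _root_.zpow_mul, hζ.zpow_eq_one, _root_.one_zpow]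
      have h3 : a * (q : ℤ) = (a * (q : ℤ) + a) + b := by omega
      rw [h3, _root_.zpow_add, h1, one_mul]
    have hmm : m j + m (k - 1 - j) = 0 := by
      rw [hm]
      simp only []
      omega
    rw [hψ, hu]
    simp only []
    rw [← Units.val_pow_eq_pow_val]
    congr 1
    rw [← zpow_natCast (ζ ^ (m j)) q, ← _root_.zpow_mul]
    exact key (m j) (m (k - 1 - j)) hmm
  have hmap : gK.map ψ = gK := by
    rw [hgK, Polynomial.map_prod]
    have h1 : ∀ j ∈ Finset.range k,
        (Polynomial.X - Polynomial.C (u j)).map ψ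
          = Polynomial.X - Polynomial.C (u (k - 1 - j)) := by
      intro j hj
      rw [Polynomial.map_sub, Polynomial.map_X, Polynomial.map_C,
        hpsi_u j (Finset.mem_range.mp hj)]
    rw [Finset.prod_congr rfl h1]
    exact Finset.prod_range_reflect (fun j => Polynomial.X - Polynomial.C (u j)) k
  have hlift : gK ∈ Polynomial.lifts (algebraMap F K) := by
    rw [Polynomial.lifts_iff_coeff_lifts]
    intro n
    apply fixed_mem_range hF
    have := congrArg (fun p => Polynomial.coeff p n) hmap
    simpa [Polynomial.coeff_map, hψ] using this
  obtain ⟨g, hgmap, hgdeg, hgmonic⟩ :=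
    Polynomial.lifts_and_natDegree_eq_and_monic hlift hgKmonic
  refine ⟨g, hgmonic, by rw [hgdeg, hgKdeg], ?_⟩
  intro P hP hPdeg hPdvd
  set PK : K[X] := P.map (algebraMap F K) with hPK
  have hPKne : PK ≠ 0 := by
    rw [hPK, Ne, Polynomial.map_eq_zero]
    exact hP
  have hPKdeg : PK.natDegree < 2 * k :=
    lt_of_le_of_lt Polynomial.natDegree_map_le hPdeg
  have hPKdvd : gK ∣ PK := by
    rw [← hgmap, hPK]
    exact Polynomial.map_dvd _ hPdvd
  have hPKroots : ∀ j : ℕ, j < k →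
      PK.eval ((ζ ^ (2 * (j : ℤ) - ((k : ℤ) - 1)) : Kˣ) : K) = 0 := by
    intro j hj
    obtain ⟨h, hh⟩ := hPKdvd
    rw [hh, Polynomial.eval_mul]
    have := hgKroots j hj
    rw [hu] at this
    simp only [] at this
    rw [hm] at this
    simp only [] at this
    rw [this, zero_mul]
  have hfinal := bch ζ hζ hodd hk (by omega) hPKne hPKdeg hPKroots
  have hsupp : PK.support = P.support :=
    Polynomial.support_map_of_injective P (algebraMap F K).injective
  rwa [hsupp] at hfinal


lemma cw_coeff_upper {k : ℕ} (x y : Fin k → F) (i : Fin k) :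
    (cw x y).coeff (k + (i : ℕ)) = x i := by
  rw [cw_coeff, dif_pos ⟨by omega, by omega⟩, dif_neg (by omega), sub_zero]
  congr 1
  apply Fin.ext
  simp

end Stmt18Aux


open Stmt18Aux in
/-- For `q = 2^s` and `k ≤ q/2`, there exists a monic polynomial `g` of degree `k` over
`F_q` whose companion matrix `C` satisfies: `[I_k | C^k]` generates a `[2k, k, k+1]` MDS
code. -/
theorem stmt18 {q s k : ℕ} (hs : 0 < s) (hq : q = 2 ^ s) (hk : 0 < k) (hkq : 2 * k ≤ q)
    {F : Type*} [Field F] [Fintype F] [DecidableEq F] (hF : Fintype.card F = q) :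
    ∃ g : F[X], g.Monic ∧ g.natDegree = k ∧
      ∀ Cmat : Matrix (Fin k) (Fin k) F,
        (∀ i j : Fin k, Cmat i j =
          if (i : ℕ) + 1 = k then -(g.coeff j)
          else if (j : ℕ) = (i : ℕ) + 1 then 1 else 0) →
        minDist (Set.range fun x : Fin k → F =>
          Matrix.vecMul x (Matrix.fromCols (1 : Matrix (Fin k) (Fin k) F) (Cmat ^ k))) = k + 1 := by
  classical
  obtain ⟨g, hgmonic, hgdeg, hbch⟩ := exists_good_g hs hq hk hkq hF
  refine ⟨g, hgmonic, hgdeg, ?_⟩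
  intro Cmat hC
  set M := Cmat ^ k with hM
  have hnorm : ∀ x : Fin k → F,
      hammingNorm (Matrix.vecMul x (Matrix.fromCols (1 : Matrix (Fin k) (Fin k) F) M))
        = (cw x (Matrix.vecMul x M)).support.card := by
    intro x
    rw [Matrix.vecMul_fromCols, Matrix.vecMul_one]
    exact cw_norm hk x _
  have hdvd : ∀ x : Fin k → F, g ∣ cw x (Matrix.vecMul x M) := fun x =>
    dvd_aux hk g hgmonic hgdeg Cmat hC k x
  have hgne : g ≠ 0 := hgmonic.ne_zero
  have hlb : ∀ x : Fin k → F, x ≠ 0 →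
      k + 1 ≤ (cw x (Matrix.vecMul x M)).support.card := by
    intro x hx
    obtain ⟨i, hi⟩ : ∃ i, x i ≠ 0 := by
      by_contra h
      push_neg at h
      exact hx (funext h)
    refine hbch _ ?_ (cw_natDegree_lt hk x _) (hdvd x)
    intro h0
    apply hi
    have h1 := cw_coeff_upper x (Matrix.vecMul x M) i
    rw [h0, Polynomial.coeff_zero] at h1
    exact h1.symm
  set x0 : Fin k → F := fun i => if i = (⟨0, hk⟩ : Fin k) then 1 else 0 with hx0
  set y0 := Matrix.vecMul x0 M with hy0
  have hx0val : x0 ⟨0, hk⟩ = 1 := by rw [hx0]; simp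
  have hcwne : cw x0 y0 ≠ 0 := by
    intro h
    have h1 := cw_coeff_upper x0 y0 ⟨0, hk⟩
    rw [h, Polynomial.coeff_zero, hx0val] at h1
    exact one_ne_zero h1.symm
  have hPdeg : (cw x0 y0).natDegree ≤ k := by
    rw [Polynomial.natDegree_le_iff_coeff_eq_zero]
    intro N hN
    rw [cw_coeff]
    by_cases h2 : N < 2 * k
    · rw [dif_pos ⟨by omega, h2⟩, dif_neg (by omega), sub_zero, hx0]
      simp only []
      rw [if_neg]
      intro hcontra
      have := congrArg Fin.val hcontra
      simp at this
      omega
    · rw [dif_neg (by omega), dif_neg (by omega), sub_zero]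
  obtain ⟨uu, huu⟩ := hdvd x0
  have huune : uu ≠ 0 := by
    intro h
    rw [h, mul_zero] at huu
    exact hcwne huu
  have hdeg2 : (cw x0 y0).natDegree = k + uu.natDegree := by
    rw [huu, Polynomial.natDegree_mul hgne huune, hgdeg]
  obtain ⟨a, ha⟩ := Polynomial.natDegree_eq_zero.mp (by omega : uu.natDegree = 0)
  have hcoeffk : (cw x0 y0).coeff k = 1 := by
    have h1 := cw_coeff_upper x0 y0 ⟨0, hk⟩
    simpa [hx0val] using h1
  have hgk1 : g.coeff k = 1 := by
    have := hgmonic.coeff_natDegree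
    rwa [hgdeg] at this
  have ha1 : a = 1 := by
    have h2 := hcoeffk
    rw [huu, ← ha, Polynomial.coeff_mul_C, hgk1, one_mul] at h2
    exact h2
  have hcw_g : cw x0 y0 = g := by
    rw [huu, ← ha, ha1, Polynomial.C_1, mul_one]
  have hgsupp : g.support.card = k + 1 := by
    refine le_antisymm ?_ (hbch g hgne (by omega) dvd_rfl)
    calc g.support.card ≤ (Finset.range (g.natDegree + 1)).card :=
          Finset.card_le_card Polynomial.supp_subset_range_natDegree_succ
      _ = k + 1 := by rw [Finset.card_range, hgdeg]
  rw [minDist]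
  have hmem : (k + 1) ∈ {w | ∃ c ∈ Set.range (fun x : Fin k → F =>
      Matrix.vecMul x (Matrix.fromCols (1 : Matrix (Fin k) (Fin k) F) M)),
      c ≠ 0 ∧ hammingNorm c = w} := by
    refine ⟨Matrix.vecMul x0 (Matrix.fromCols (1 : Matrix (Fin k) (Fin k) F) M),
      ⟨x0, rfl⟩, ?_, ?_⟩
    · intro h
      have h1 := congrFun h (Sum.inl (⟨0, hk⟩ : Fin k))
      rw [Matrix.vecMul_fromCols, Matrix.vecMul_one] at h1
      simp only [Sum.elim_inl, Pi.zero_apply] at h1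
      rw [hx0val] at h1
      exact one_ne_zero h1
    · rw [hnorm x0, ← hy0, hcw_g, hgsupp]
  apply le_antisymm
  · exact Nat.sInf_le hmem
  · refine le_csInf ⟨k + 1, hmem⟩ ?_
    rintro w ⟨c, ⟨x, rfl⟩, hc0, rfl⟩
    have hxne : x ≠ 0 := by
      intro h
      apply hc0
      rw [h]
      simp only []
      rw [Matrix.zero_vecMul]
    rw [hnorm x]
    exact hlb x hxne
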